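/- There exists a complete transfer operator for (A, δ) if and only if the following hold: there exists a central orthogonal projection P ∈ A (P² = P, P* = P, P commutes with all of A) such that (a) δ(P) = δ(1), (b) δ restricted to P·A = {P·a : a ∈ A} is injective with image equal to δ(A), and (ii) δ(A) = {δ(1)·a·δ(1) : a ∈ A}. Moreover, in that case P = δ*(1) for the complete transfer operator δ*. -/

import Mathlib

open ComplexStarModule

section AuxTransfer
variable {A : Type*} [CStarAlgebra A] [PartialOrder A] [StarOrderedRing A]

/-- A nonnegative element whose cube is zero is zero. -/
lemma aux_cube_zero {x : A} (hx : 0 ≤ x) (h3 : x * x * x = 0) : x = 0 := by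
  have hsa : star x = x := hx.isSelfAdjoint.star_eq
  have h4 : (x * x) * (x * x) = 0 := by
    calc (x * x) * (x * x) = (x * x * x) * x := by simp [mul_assoc]
    _ = 0 := by rw [h3, zero_mul]
  have hx2 : x * x = 0 := by
    have : ‖x * x‖ * ‖x * x‖ = 0 := by
      rw [← CStarRing.norm_star_mul_self (x := x * x)]
      simp [star_mul, hsa, h4]
    exact norm_eq_zero.mp (mul_self_eq_zero.mp this)
  have : ‖x‖ * ‖x‖ = 0 := by
    rw [← CStarRing.norm_star_mul_self (x := x), hsa, hx2, norm_zero]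
  exact norm_eq_zero.mp (mul_self_eq_zero.mp this)

/-- A multiplicative star-preserving map sends nonneg elements to nonneg elements. -/
lemma aux_endo_nonneg {δ : A → A} (hmul : ∀ a b, δ (a * b) = δ a * δ b)
    (hstar : ∀ a, δ (star a) = star (δ a)) {a : A} (ha : 0 ≤ a) : 0 ≤ δ a := by
  have hs : star (CFC.sqrt a) = CFC.sqrt a := (IsSelfAdjoint.of_nonneg (CFC.sqrt_nonneg a)).star_eq
  calc (0 : A) ≤ star (δ (CFC.sqrt a)) * δ (CFC.sqrt a) := star_mul_self_nonneg _
  _ = δ a := by rw [← hstar, hs, ← hmul, CFC.sqrt_mul_sqrt_self a ha]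

/-- Multiplication by a central projection commutes with taking negative parts. -/
lemma aux_proj_negPart {P c : A} (hP2 : P * P = P) (hPstar : star P = P)
    (hPc : ∀ a : A, P * a = a * P) (hc : IsSelfAdjoint c) (hcP : P * c = c) :
    P * c⁻ = c⁻ := by
  let φ : A →⋆ₙₐ[ℂ] A :=
    { toFun := fun x => P * x
      map_add' := fun x y => mul_add P x y
      map_smul' := fun r x => mul_smul_comm r P x
      map_zero' := mul_zero P
      map_mul' := fun x y => by
        show P * (x * y) = (P * x) * (P * y)
        conv_rhs => rw [mul_assoc, ← mul_assoc x P y, ← hPc x, ← mul_assoc, ← mul_assoc, hP2,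
          mul_assoc]
      map_star' := fun x => by
        show P * star x = star (P * x)
        rw [star_mul, hPstar, ← hPc] }
  have hφcont : Continuous φ := continuous_const.mul continuous_id
  have hφc : φ c = c := hcP
  have hφsa : IsSelfAdjoint (φ c) := by rw [hφc]; exact hc
  have key := NonUnitalStarAlgHom.map_cfcₙ (R := ℝ) φ (·⁻ : ℝ → ℝ) c
    (by cfc_cont_tac) (by cfc_zero_tac) hφcont hc hφsa
  calc P * c⁻ = φ (cfcₙ (·⁻ : ℝ → ℝ) c) := by rw [CFC.negPart_def]; rfl
  _ = cfcₙ (·⁻ : ℝ → ℝ) (φ c) := key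
  _ = c⁻ := by rw [hφc, CFC.negPart_def]

/-- A positive linear map on a C*-algebra is star-preserving. -/
lemma aux_star_pres {δs : A → A} (hlin : IsLinearMap ℂ δs)
    (hpos : ∀ a : A, 0 ≤ a → 0 ≤ δs a) (a : A) : δs (star a) = star (δs a) := by
  have hsa : ∀ x : A, IsSelfAdjoint x → IsSelfAdjoint (δs x) := by
    intro x hx
    have hd : δs (x⁺ - x⁻) = δs x⁺ - δs x⁻ := (IsLinearMap.mk' δs hlin).map_sub _ _
    rw [CFC.posPart_sub_negPart x hx] at hd
    rw [hd]
    exact ((hpos _ (CFC.posPart_nonneg x)).isSelfAdjoint).sub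
      ((hpos _ (CFC.negPart_nonneg x)).isSelfAdjoint)
  have hx : IsSelfAdjoint (ℜ a : A) := (ℜ a).2
  have hy : IsSelfAdjoint (ℑ a : A) := (ℑ a).2
  have hdec : (ℜ a : A) + Complex.I • (ℑ a : A) = a := realPart_add_I_smul_imaginaryPart a
  have hstar_a : star a = (ℜ a : A) - Complex.I • (ℑ a : A) := by
    conv_lhs => rw [← hdec]
    rw [star_add, star_smul, hx.star_eq, hy.star_eq, Complex.star_def, Complex.conj_I,
      neg_smul, ← sub_eq_add_neg]
  have e1 : δs ((ℜ a : A) - Complex.I • (ℑ a : A))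
      = δs (ℜ a : A) - Complex.I • δs (ℑ a : A) := by
    rw [show δs ((ℜ a : A) - Complex.I • (ℑ a : A))
        = (IsLinearMap.mk' δs hlin) ((ℜ a : A) - Complex.I • (ℑ a : A)) from rfl,
      map_sub, map_smul]
    rfl
  have e2 : δs ((ℜ a : A) + Complex.I • (ℑ a : A))
      = δs (ℜ a : A) + Complex.I • δs (ℑ a : A) := by
    rw [show δs ((ℜ a : A) + Complex.I • (ℑ a : A))
        = (IsLinearMap.mk' δs hlin) ((ℜ a : A) + Complex.I • (ℑ a : A)) from rfl,
      map_add, map_smul]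
    rfl
  have L : δs (star a) = δs (ℜ a : A) - Complex.I • δs (ℑ a : A) := by rw [hstar_a, e1]
  have R : star (δs a) = δs (ℜ a : A) - Complex.I • δs (ℑ a : A) := by
    conv_lhs => rw [← hdec]
    rw [e2, star_add, star_smul, (hsa _ hx).star_eq, (hsa _ hy).star_eq, Complex.star_def,
      Complex.conj_I, neg_smul, ← sub_eq_add_neg]
  rw [L, R]

end AuxTransfer

/-- A (not necessarily unital) *-algebra endomorphism of a unital C*-algebra:
a linear, multiplicative, star-preserving map. -/
def IsEndomorphism {A : Type*} [CStarAlgebra A] (δ : A → A) : Prop :=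
  IsLinearMap ℂ δ ∧ (∀ a b, δ (a * b) = δ a * δ b) ∧ (∀ a, δ (star a) = star (δ a))

/-- A transfer operator for `(A, δ)`: a continuous positive linear map `δs`
satisfying `δs (δ a * b) = a * δs b`. -/
def IsTransferOperator {A : Type*} [CStarAlgebra A] [PartialOrder A] [StarOrderedRing A]
    (δ δs : A → A) : Prop :=
  Continuous δs ∧ IsLinearMap ℂ δs ∧ (∀ a, 0 ≤ a → 0 ≤ δs a) ∧
    ∀ a b, δs (δ a * b) = a * δs b

/-- A complete transfer operator exists iff there is a central orthogonal
projection P with δ(P) = δ(1) such that δ restricted to P·A is injective with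
image δ(A), and δ(A) = δ(1)·A·δ(1). Moreover in that case P = δ*(1). -/
theorem complete_transfer_exists_iff_central_projection {A : Type*} [CStarAlgebra A]
    [PartialOrder A] [StarOrderedRing A] (δ : A → A) (hδ : IsEndomorphism δ) :
    ((∃ δs : A → A, IsTransferOperator δ δs ∧ ∀ a : A, δ (δs a) = δ 1 * a * δ 1) ↔
      (∃ P : A, P * P = P ∧ star P = P ∧ (∀ a : A, P * a = a * P) ∧
          δ P = δ 1 ∧
          Set.InjOn δ {x : A | ∃ a : A, x = P * a} ∧
          δ '' {x : A | ∃ a : A, x = P * a} = Set.range δ) ∧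
        Set.range δ = {x : A | ∃ a : A, x = δ 1 * a * δ 1}) ∧
    (∀ δs : A → A, ∀ P : A,
      IsTransferOperator δ δs → (∀ a : A, δ (δs a) = δ 1 * a * δ 1) →
      P * P = P → star P = P → (∀ a : A, P * a = a * P) →
      δ P = δ 1 →
      Set.InjOn δ {x : A | ∃ a : A, x = P * a} →
      δ '' {x : A | ∃ a : A, x = P * a} = Set.range δ →
      P = δs 1) := by
  obtain ⟨hδlin, hδmul, hδstar⟩ := hδ
  have hδ1 : δ 1 * δ 1 = δ 1 := by rw [← hδmul, one_mul]
  have hδ1star : star (δ 1) = δ 1 := by rw [← hδstar, star_one]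
  have hδ1l : ∀ a, δ 1 * δ a = δ a := fun a => by rw [← hδmul, one_mul]
  have hδ1r : ∀ a, δ a * δ 1 = δ a := fun a => by rw [← hδmul, mul_one]
  constructor
  · constructor
    · -- forward direction
      rintro ⟨δs, ⟨hcont, hlin, hpos, htr⟩, hcomp⟩
      have hone : (0:A) ≤ 1 := by
        have h := star_mul_self_nonneg (1 : A); rwa [star_one, one_mul] at h
      have hPstar : star (δs 1) = δs 1 := (hpos 1 hone).isSelfAdjoint.star_eq
      have hstarpres := aux_star_pres hlin hpos
      have h1 : ∀ a : A, δs (δ a) = a * δs 1 := by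
        intro a; have := htr a 1; rwa [mul_one] at this
      have h2 : ∀ a : A, δs (δ a) = δs 1 * a := by
        intro a
        calc δs (δ a) = star (star (δs (δ a))) := (star_star _).symm
        _ = star (δs (star (δ a))) := by rw [hstarpres]
        _ = star (δs (δ (star a))) := by rw [hδstar]
        _ = star (star a * δs 1) := by rw [h1]
        _ = star (δs 1) * a := by rw [star_mul, star_star]
        _ = δs 1 * a := by rw [hPstar]
      have hcomm : ∀ a : A, δs 1 * a = a * δs 1 := fun a => (h2 a).symm.trans (h1 a)
      have hPδ : δ (δs 1) = δ 1 := by rw [hcomp 1, mul_one, hδ1]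
      have hδsδ1 : δs (δ 1) = δs 1 := by
        have := htr 1 1; rwa [mul_one, one_mul] at this
      have hP2 : δs 1 * δs 1 = δs 1 := by
        have := h1 (δs 1)
        rw [hPδ, hδsδ1] at this
        exact this.symm
      refine ⟨⟨δs 1, hP2, hPstar, hcomm, hPδ, ?_, ?_⟩, ?_⟩
      · rintro x ⟨a, rfl⟩ y ⟨b, rfl⟩ hxy
        have hx : δs (δ (δs 1 * a)) = δs 1 * a := by
          rw [h2, ← mul_assoc, hP2]
        have hy' : δs (δ (δs 1 * b)) = δs 1 * b := by
          rw [h2, ← mul_assoc, hP2]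
        rw [← hx, ← hy', hxy]
      · ext z
        constructor
        · rintro ⟨x, _, rfl⟩; exact ⟨x, rfl⟩
        · rintro ⟨a, rfl⟩
          exact ⟨δs 1 * a, ⟨a, rfl⟩, by rw [hδmul, hPδ, hδ1l]⟩
      · ext z
        constructor
        · rintro ⟨a, rfl⟩
          exact ⟨δ a, by rw [hδ1l, hδ1r]⟩
        · rintro ⟨a, rfl⟩
          exact ⟨δs a, hcomp a⟩
    · -- converse direction
      rintro ⟨⟨P, hP2, hPstar, hPc, hInjP⟩, hRange⟩
      obtain ⟨hPδ, hInj, hIm⟩ := hInjP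
      have hS : ∀ x : A, P * x = x → x ∈ {x : A | ∃ a : A, x = P * a} :=
        fun x h => ⟨x, h.symm⟩
      have key : ∀ a : A, ∃ x, P * x = x ∧ δ x = δ 1 * a * δ 1 := by
        intro a
        have hmem : δ 1 * a * δ 1 ∈ Set.range δ := by
          rw [hRange]; exact ⟨a, rfl⟩
        rw [← hIm] at hmem
        obtain ⟨x, ⟨b, hb⟩, hδx⟩ := hmem
        exact ⟨x, by rw [hb, ← mul_assoc, hP2], hδx⟩
      choose δs hPδs hδδs using key
      have eqS : ∀ x y : A, P * x = x → P * y = y → δ x = δ y → x = y :=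
        fun x y hx hy h => hInj (hS x hx) (hS y hy) h
      have hmulmem : ∀ (a x : A), P * x = x → P * (a * x) = a * x := by
        intro a x hx
        calc P * (a * x) = (P * a) * x := (mul_assoc _ _ _).symm
        _ = (a * P) * x := by rw [hPc]
        _ = a * (P * x) := mul_assoc _ _ _
        _ = a * x := by rw [hx]
      have hadd : ∀ a b : A, δs (a + b) = δs a + δs b := by
        intro a b
        refine eqS _ _ (hPδs _) (by rw [mul_add, hPδs, hPδs]) ?_
        rw [hδδs, hδlin.map_add, hδδs, hδδs, mul_add, add_mul]
      have hsmul : ∀ (c : ℂ) (a : A), δs (c • a) = c • δs a := by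
        intro c a
        refine eqS _ _ (hPδs _) (by rw [mul_smul_comm, hPδs]) ?_
        rw [hδδs, hδlin.map_smul, hδδs, mul_smul_comm, smul_mul_assoc]
      have hlin : IsLinearMap ℂ δs := ⟨hadd, hsmul⟩
      have htr : ∀ a b : A, δs (δ a * b) = a * δs b := by
        intro a b
        refine eqS _ _ (hPδs _) (hmulmem a _ (hPδs b)) ?_
        rw [hδδs, hδmul, hδδs]
        calc δ 1 * (δ a * b) * δ 1 = (δ 1 * δ a) * (b * δ 1) := by simp only [mul_assoc]
        _ = δ a * (b * δ 1) := by rw [hδ1l]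
        _ = (δ a * δ 1) * (b * δ 1) := by rw [hδ1r]
        _ = δ a * (δ 1 * b * δ 1) := by simp only [mul_assoc]
      have hstar : ∀ a : A, δs (star a) = star (δs a) := by
        intro a
        refine eqS _ _ (hPδs _) ?_ ?_
        · conv_rhs => rw [← hPδs a, star_mul, hPstar, ← hPc]
        · rw [hδδs, hδstar, hδδs, star_mul, star_mul, hδ1star]
          simp only [mul_assoc]
      have hδs1 : δs 1 = P := by
        refine eqS _ _ (hPδs 1) hP2 ?_
        rw [hδδs, mul_one, hδ1, hPδ]
      have hpos : ∀ a : A, 0 ≤ a → 0 ≤ δs a := by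
        intro a ha
        have hcsa : IsSelfAdjoint (δs a) := by
          rw [IsSelfAdjoint, ← hstar, ha.isSelfAdjoint.star_eq]
        have hδc : 0 ≤ δ (δs a) := by
          rw [hδδs]
          have := star_left_conjugate_nonneg ha (δ 1)
          rwa [hδ1star] at this
        obtain ⟨u, hudef⟩ : ∃ u, (δs a)⁻ = u := ⟨_, rfl⟩
        have husa : IsSelfAdjoint u := hudef ▸ (CFC.negPart_nonneg (δs a)).isSelfAdjoint
        have hunn : 0 ≤ u := hudef ▸ CFC.negPart_nonneg (δs a)
        have hsub : (δs a)⁺ - u = δs a := hudef ▸ CFC.posPart_sub_negPart (δs a) hcsa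
        have huv : u * (δs a)⁺ = 0 := hudef ▸ CFC.negPart_mul_posPart (δs a)
        have hueq : u * δs a * u = -(u * u * u) := by
          conv_lhs => rw [← hsub]
          rw [mul_sub, sub_mul, huv, zero_mul, zero_sub]
        have h2 : 0 ≤ δ (u * δs a * u) := by
          rw [hδmul, hδmul]
          have hδu_sa : star (δ u) = δ u := by rw [← hδstar, husa.star_eq]
          have := star_left_conjugate_nonneg hδc (δ u)
          rwa [hδu_sa] at this
        have hu3 : 0 ≤ u * u * u := by
          have := star_left_conjugate_nonneg hunn u
          rwa [husa.star_eq] at this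
        have hδu3zero : δ (u * u * u) = 0 := by
          refine le_antisymm ?_ (aux_endo_nonneg hδmul hδstar hu3)
          rw [hueq, hδlin.map_neg] at h2
          exact neg_nonneg.mp h2
        have hδu : δ u = 0 := by
          apply aux_cube_zero (aux_endo_nonneg hδmul hδstar hunn)
          rw [← hδmul, ← hδmul]
          exact hδu3zero
        have hu0 : u = 0 := by
          refine eqS _ _ ?_ (by rw [mul_zero]) ?_
          · rw [← hudef]
            exact aux_proj_negPart hP2 hPstar hPc hcsa (hPδs a)
          · rw [hδu]
            exact hδlin.map_zero.symm
        calc (0:A) ≤ (δs a)⁺ := CFC.posPart_nonneg _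
        _ = δs a := by
            conv_rhs => rw [← hsub]
            rw [hu0, sub_zero]
      have hre : ∀ (t : ℝ) (y : A), δs (t • y) = t • δs y := by
        intro t y
        rw [← algebraMap_smul ℂ t y, hsmul, algebraMap_smul]
      have hsubδ : ∀ p q : A, δs (p - q) = δs p - δs q :=
        fun p q => (IsLinearMap.mk' δs hlin).map_sub p q
      have hbound_sa : ∀ x : A, IsSelfAdjoint x → ‖δs x‖ ≤ 3 * ‖P‖ * ‖x‖ := by
        intro x hx
        have hup : 0 ≤ ‖x‖ • P - δs x := by
          have h0 : 0 ≤ (‖x‖ : ℝ) • (1:A) - x := by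
            have := IsSelfAdjoint.le_algebraMap_norm_self hx
            rwa [Algebra.algebraMap_eq_smul_one, ← sub_nonneg] at this
          have hp := hpos _ h0
          rwa [hsubδ, hre, hδs1] at hp
        have hlo : 0 ≤ δs x + ‖x‖ • P := by
          have h0 : 0 ≤ x + (‖x‖:ℝ) • (1:A) := by
            have h' := IsSelfAdjoint.le_algebraMap_norm_self hx.neg
            rw [norm_neg, Algebra.algebraMap_eq_smul_one] at h'
            have h'' := sub_nonneg.mpr h'
            rwa [sub_neg_eq_add, add_comm] at h''
          have hp := hpos _ h0
          rwa [hlin.map_add, hre, hδs1] at hp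
        have hle2 : δs x + ‖x‖ • P ≤ ‖x‖ • P + ‖x‖ • P :=
          add_le_add_left (sub_nonneg.mp hup) _
        have hn1 : ‖δs x + ‖x‖ • P‖ ≤ ‖(‖x‖:ℝ) • P + (‖x‖:ℝ) • P‖ :=
          CStarAlgebra.norm_le_norm_of_nonneg_of_le hlo hle2
        have hnP : ‖(‖x‖ : ℝ) • P‖ = ‖x‖ * ‖P‖ := by rw [norm_smul, norm_norm]
        calc ‖δs x‖ = ‖(δs x + ‖x‖ • P) - ‖x‖ • P‖ := by rw [add_sub_cancel_right]
        _ ≤ ‖δs x + ‖x‖ • P‖ + ‖(‖x‖:ℝ) • P‖ := norm_sub_le _ _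
        _ ≤ ‖(‖x‖:ℝ) • P + (‖x‖:ℝ) • P‖ + ‖x‖ * ‖P‖ := by
            rw [hnP]; exact add_le_add_left hn1 _
        _ ≤ (‖(‖x‖:ℝ) • P‖ + ‖(‖x‖:ℝ) • P‖) + ‖x‖ * ‖P‖ :=
            add_le_add_left (norm_add_le _ _) _
        _ = 3 * ‖P‖ * ‖x‖ := by rw [hnP]; ring
      have hbound : ∀ a : A, ‖δs a‖ ≤ 6 * ‖P‖ * ‖a‖ := by
        intro a
        have hx : IsSelfAdjoint (ℜ a : A) := (ℜ a).2
        have hy : IsSelfAdjoint (ℑ a : A) := (ℑ a).2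
        have hdec : (ℜ a : A) + Complex.I • (ℑ a : A) = a := realPart_add_I_smul_imaginaryPart a
        have hnx : ‖(ℜ a : A)‖ ≤ ‖a‖ := by
          rw [realPart_apply_coe, norm_smul]
          have h1 : ‖a + star a‖ ≤ ‖a‖ + ‖a‖ := by
            simpa [norm_star] using norm_add_le a (star a)
          have h3 : ‖((2:ℝ)⁻¹)‖ = (2:ℝ)⁻¹ := by norm_num [Real.norm_eq_abs]
          rw [h3]; linarith
        have hny : ‖(ℑ a : A)‖ ≤ ‖a‖ := by
          rw [imaginaryPart_apply_coe, norm_smul, norm_smul]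
          have h1 : ‖a - star a‖ ≤ ‖a‖ + ‖a‖ := by
            simpa [norm_star] using norm_sub_le a (star a)
          have h2 : ‖-Complex.I‖ = 1 := by simp
          have h3 : ‖((2:ℝ)⁻¹)‖ = (2:ℝ)⁻¹ := by norm_num [Real.norm_eq_abs]
          rw [h2, h3, one_mul]; linarith
        have hδdec : δs a = δs (ℜ a : A) + Complex.I • δs (ℑ a : A) := by
          conv_lhs => rw [← hdec]
          rw [hlin.map_add, hsmul]
        have h3p : (0:ℝ) ≤ 3 * ‖P‖ := by positivity
        have b1 := mul_le_mul_of_nonneg_left hnx h3p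
        have b2 := mul_le_mul_of_nonneg_left hny h3p
        calc ‖δs a‖ ≤ ‖δs (ℜ a : A)‖ + ‖Complex.I • δs (ℑ a : A)‖ := by
              rw [hδdec]; exact norm_add_le _ _
        _ = ‖δs (ℜ a : A)‖ + ‖δs (ℑ a : A)‖ := by rw [norm_smul, Complex.norm_I, one_mul]
        _ ≤ 3 * ‖P‖ * ‖(ℜ a : A)‖ + 3 * ‖P‖ * ‖(ℑ a : A)‖ :=
            add_le_add (hbound_sa _ hx) (hbound_sa _ hy)
        _ ≤ 6 * ‖P‖ * ‖a‖ := by linarith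
      have hcont : Continuous δs := by
        have := AddMonoidHomClass.continuous_of_bound (IsLinearMap.mk' δs hlin).toAddMonoidHom
          (6 * ‖P‖) (fun x => hbound x)
        exact this
      exact ⟨δs, ⟨hcont, hlin, hpos, htr⟩, hδδs⟩
  · -- uniqueness
    intro δs P hT hcomp hP2 hPstar hPc hPδ hInj hIm
    obtain ⟨hcont, hlin, hpos, htr⟩ := hT
    have h1 : δs (δ P) = P * δs 1 := by
      have := htr P 1; rwa [mul_one] at this
    have h2 : δs (δ 1) = δs 1 := by
      have := htr 1 1; rwa [mul_one, one_mul] at this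
    have h3 : P * δs 1 = δs 1 := by rw [← h1, hPδ, h2]
    refine hInj ⟨P, hP2.symm⟩ ⟨δs 1, h3.symm⟩ ?_
    rw [hPδ, hcomp 1, mul_one, hδ1]
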